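/- (Completeness of the even-odd abstraction.) Let P be a symmetric rendez-vous protocol and n ∈ ℕ. If C_i^(n) →* C_f^(n) and n is even, then (q_i^L, γ_i^E) ⇝* (q_f^L, γ_f^E); if C_i^(n) →* C_f^(n) and n is odd, then (q_i^L, γ_i^O) ⇝* (q_f^L, γ_f^O). -/

import Mathlib

/-- Actions labelling edges of a rendez-vous protocol: request (`recv`, written `?a`)
or answer (`send`, written `!a`). -/
inductive RVAct (A : Type) : Type
  | send : A → RVAct A
  | recv : A → RVAct A

/-- A rendez-vous protocol: a finite set of states `Q` partitioned (via `isLeader`)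
into process states and leader states, a finite alphabet `A`, initial/final states for
processes and for the leader, and a set of edges staying within each part. -/
structure RVProtocol (Q A : Type) : Type where
  isLeader : Q → Bool
  qi : Q
  qf : Q
  qiL : Q
  qfL : Q
  hqi : isLeader qi = false
  hqf : isLeader qf = false
  hqiL : isLeader qiL = true
  hqfL : isLeader qfL = true
  E : Set (Q × RVAct A × Q)
  hE : ∀ e ∈ E, isLeader e.1 = isLeader e.2.2

namespace RVProtocol

variable {Q A : Type} [DecidableEq Q] (P : RVProtocol Q A)

/-- A configuration is a multiset of states with exactly one occurrence of a leader state. -/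
def IsConfig (C : Multiset Q) : Prop :=
  (C.filter (fun q => P.isLeader q = true)).card = 1

/-- One rendez-vous step between configurations. -/
def Step (C C' : Multiset Q) : Prop :=
  ∃ (a : A) (q1 q2 q1' q2' : Q),
    (q1, RVAct.recv a, q2) ∈ P.E ∧ (q1', RVAct.send a, q2') ∈ P.E ∧
    0 < C.count q1 ∧ 0 < C.count q1' ∧ 2 ≤ C.count q1 + C.count q1' ∧
    C' = C - {q1, q1'} + {q2, q2'}

/-- Reachability: reflexive-transitive closure of `Step`. -/
def Reach : Multiset Q → Multiset Q → Prop := Relation.ReflTransGen P.Step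

/-- The initial configuration with `n` processes. -/
def Ci (n : ℕ) : Multiset Q := Multiset.replicate n P.qi + {P.qiL}

/-- The final configuration with `n` processes. -/
def Cf (n : ℕ) : Multiset Q := Multiset.replicate n P.qf + {P.qfL}

/-! The Petri net `N_P` associated to a protocol `P`: one place per state of `Q`
(markings are functions `Q → ℕ`), a transition `t_i` producing a token in `p_{q_i}`,
a transition `t_f^L` consuming a token from `p_{q_f^L}`, and for every pair of edges
`(q1,!a,q1')`, `(q2,?a,q2')` a transition with precondition `p_{q1} + p_{q2}` and
postcondition `p_{q1'} + p_{q2'}`.  We describe it by its firing relation. -/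
def NPStep (M M' : Q → ℕ) : Prop :=
  -- transition `t_i`
  (M' = M + Pi.single P.qi 1) ∨
  -- transition `t_f^L`
  (Pi.single P.qfL 1 ≤ M ∧ M' = M - Pi.single P.qfL 1) ∨
  -- rendez-vous transitions
  (∃ (a : A) (q1 q2 q1' q2' : Q),
    (q1, RVAct.send a, q1') ∈ P.E ∧ (q2, RVAct.recv a, q2') ∈ P.E ∧
    Pi.single q1 1 + Pi.single q2 1 ≤ M ∧
    M' = M - (Pi.single q1 1 + Pi.single q2 1) + (Pi.single q1' 1 + Pi.single q2' 1))

/-- Reachability in the Petri net `N_P`. -/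
def NPReach : (Q → ℕ) → (Q → ℕ) → Prop := Relation.ReflTransGen P.NPStep

/-- The initial marking `M_0` of `N_P`: one token in `p_{q_i^L}`, none elsewhere. -/
def M0 : Q → ℕ := Pi.single P.qiL 1

/-- The marking `M_f^{(n)}`: `n` tokens in `p_{q_f}`, none elsewhere. -/
def Mf (n : ℕ) : Q → ℕ := Pi.single P.qf n

end RVProtocol


namespace RVProtocol

variable {Q A : Type} (P : RVProtocol Q A)

/-- A rendez-vous protocol is symmetric when `(q,!a,q') ∈ E` iff `(q,?a,q') ∈ E`;
such an edge is then written `(q,a,q')`. -/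
def IsSymmetric : Prop :=
  ∀ (q : Q) (a : A) (q' : Q), (q, RVAct.send a, q') ∈ P.E ↔ (q, RVAct.recv a, q') ∈ P.E

/-- The edge relation of the underlying graph of the protocol: there is an edge from
`q` to `q'` whenever `(q,a,q') ∈ E` for some letter `a`. -/
def Adj (q q' : Q) : Prop := ∃ a : A, (q, RVAct.send a, q') ∈ P.E

/-- Every process state is on a path from `q_i` to `q_f` in the underlying graph. -/
def Connected : Prop :=
  ∀ q : Q, P.isLeader q = false →
    Relation.ReflTransGen P.Adj P.qi q ∧ Relation.ReflTransGen P.Adj q P.qf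

end RVProtocol

/-- Flip the parity values (`false` = even `E`, `true` = odd `O`) of `γ` at `x1` and `x2`,
with no change at all if `x1 = x2`. -/
def flipTwo {X : Type} [DecidableEq X] (γ : X → Bool) (x1 x2 : X) : X → Bool :=
  if x1 = x2 then γ
  else fun x => if x = x1 ∨ x = x2 then !(γ x) else γ x

namespace RVProtocol

variable {Q A : Type} [DecidableEq Q] (P : RVProtocol Q A)

/-- The process states `Q_P` of the protocol. -/
abbrev ProcState : Type := {q : Q // P.isLeader q = false}

/-- The leader states `Q_L` of the protocol. -/
abbrev LeadState : Type := {q : Q // P.isLeader q = true}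

/-- Even-odd abstract configurations: a leader state together with a parity
(`false` = even `E`, `true` = odd `O`) for each process state. -/
abbrev AbsConf : Type := P.LeadState × (P.ProcState → Bool)

/-- One step of the even-odd abstraction: either the leader takes an edge together with
one process (case 1), or two processes perform a rendez-vous (case 2); the parities are
updated by flipping at the (distinct) endpoints of each edge used. -/
def EOStep (c1 c2 : P.AbsConf) : Prop :=
  (∃ (a : A) (q1 q2 : P.ProcState),
      ((c1.1 : Q), RVAct.send a, (c2.1 : Q)) ∈ P.E ∧
      ((q1 : Q), RVAct.send a, (q2 : Q)) ∈ P.E ∧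
      c2.2 = flipTwo c1.2 q1 q2) ∨
  (c1.1 = c2.1 ∧
    ∃ (a : A) (q1 q2 q3 q4 : P.ProcState),
      ((q1 : Q), RVAct.send a, (q2 : Q)) ∈ P.E ∧
      ((q3 : Q), RVAct.send a, (q4 : Q)) ∈ P.E ∧
      c2.2 = flipTwo (flipTwo c1.2 q1 q2) q3 q4)

/-- Reachability in the even-odd abstraction. -/
def EOReach : P.AbsConf → P.AbsConf → Prop := Relation.ReflTransGen P.EOStep

/-- The abstract configuration `(q_i^L, γ_i^E)`: all parities even. -/
def absIE : P.AbsConf := (⟨P.qiL, P.hqiL⟩, fun _ => false)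

/-- The abstract configuration `(q_f^L, γ_f^E)`: all parities even. -/
def absFE : P.AbsConf := (⟨P.qfL, P.hqfL⟩, fun _ => false)

/-- The abstract configuration `(q_i^L, γ_i^O)`: parity odd exactly at `q_i`. -/
def absIO : P.AbsConf := (⟨P.qiL, P.hqiL⟩, fun q => decide ((q : Q) = P.qi))

/-- The abstract configuration `(q_f^L, γ_f^O)`: parity odd exactly at `q_f`. -/
def absFO : P.AbsConf := (⟨P.qfL, P.hqfL⟩, fun q => decide ((q : Q) = P.qf))

/-- The concretization `[[(q^L, γ)]]` of an abstract configuration: configurations `C`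
with `C(q^L) = 1` and, for each process state `q`, `C(q)` even iff `γ(q) = E`. -/
def Interp (c : P.AbsConf) (C : Multiset Q) : Prop :=
  P.IsConfig C ∧ C.count (c.1 : Q) = 1 ∧
    ∀ q : P.ProcState, (Even (C.count (q : Q)) ↔ c.2 q = false)

end RVProtocol


section EOAux

private lemma even_flip1 (cnt cnt' : ℕ) (P1 P3 : Prop) [Decidable P1] [Decidable P3] (g : Bool)
    (h : cnt' + (if P1 then 1 else 0) = cnt + (if P3 then 1 else 0))
    (hg : Even cnt ↔ g = false) :
    (Even cnt' ↔ (g.xor ((decide P1).xor (decide P3))) = false) := by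
  by_cases h1 : P1 <;> by_cases h3 : P3 <;> cases g <;>
    simp_all [Nat.even_iff] <;> omega

private lemma even_flip2 (cnt cnt' : ℕ) (P1 P2 P3 P4 : Prop)
    [Decidable P1] [Decidable P2] [Decidable P3] [Decidable P4] (g : Bool)
    (h : cnt' + ((if P1 then 1 else 0) + (if P2 then 1 else 0))
       = cnt + ((if P3 then 1 else 0) + (if P4 then 1 else 0)))
    (hg : Even cnt ↔ g = false) :
    (Even cnt' ↔ ((g.xor ((decide P2).xor (decide P4))).xor ((decide P1).xor (decide P3))) = false) := by
  by_cases h1 : P1 <;> by_cases h2 : P2 <;> by_cases h3 : P3 <;> by_cases h4 : P4 <;> cases g <;>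
    simp_all [Nat.even_iff] <;> omega

lemma flipTwo_spec {X : Type} [DecidableEq X] (γ : X → Bool) (x1 x2 x : X) :
    flipTwo γ x1 x2 x = ((γ x).xor ((decide (x = x1)).xor (decide (x = x2)))) := by
  unfold flipTwo
  by_cases h : x1 = x2
  · subst h; simp
  · by_cases h1 : x = x1 <;> by_cases h2 : x = x2 <;> simp_all

namespace RVProtocol

variable {Q A : Type} [DecidableEq Q] (P : RVProtocol Q A)

lemma leader_char {C : Multiset Q} (h : P.IsConfig C) :
    ∃ x, P.isLeader x = true ∧
      ∀ q, P.isLeader q = true → C.count q = if q = x then 1 else 0 := by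
  obtain ⟨x, hx⟩ := Multiset.card_eq_one.mp h
  have hxmem : x ∈ C.filter (fun q => P.isLeader q = true) := by rw [hx]; simp
  refine ⟨x, (Multiset.mem_filter.mp hxmem).2, ?_⟩
  intro q hq
  have h2 := congrArg (Multiset.count q) hx
  rwa [Multiset.count_filter, if_pos hq, Multiset.count_singleton] at h2

lemma count_pair (q q1 q1' : Q) :
    Multiset.count q ({q1, q1'} : Multiset Q)
      = (if q = q1 then 1 else 0) + (if q = q1' then 1 else 0) := by
  rw [show ({q1, q1'} : Multiset Q) = q1 ::ₘ {q1'} from rfl,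
      Multiset.count_cons, Multiset.count_singleton]
  ring

lemma step_card_facts {C C' : Multiset Q} (hs : P.Step C C') :
    Multiset.card C ≤ Multiset.card C' ∧
    (Multiset.card C' = Multiset.card C →
      ∃ (a : A) (q1 q2 q1' q2' : Q),
        (q1, RVAct.recv a, q2) ∈ P.E ∧ (q1', RVAct.send a, q2') ∈ P.E ∧
        ({q1, q1'} : Multiset Q) ≤ C ∧ C' = C - {q1, q1'} + {q2, q2'}) := by
  obtain ⟨a, q1, q2, q1', q2', he1, he2, h1, h1', hsum, hC'⟩ := hs
  have hsub : C - ({q1, q1'} : Multiset Q) = C - (C ∩ {q1, q1'}) := by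
    ext q
    simp only [Multiset.count_sub, Multiset.count_inter]
    omega
  have hle : C ∩ ({q1, q1'} : Multiset Q) ≤ C := Multiset.inter_le_left
  have h2 : Multiset.card (C ∩ ({q1, q1'} : Multiset Q)) ≤ 2 := by
    have := Multiset.card_le_card (Multiset.inter_le_right : C ∩ ({q1, q1'} : Multiset Q) ≤ {q1, q1'})
    simpa using this
  have h3 := Multiset.card_le_card hle
  have hcc : Multiset.card C' =
      Multiset.card C - Multiset.card (C ∩ ({q1, q1'} : Multiset Q)) + 2 := by
    rw [hC', hsub, Multiset.card_add, Multiset.card_sub hle]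
    simp
  constructor
  · omega
  · intro hcard
    have hcc2 : Multiset.card (C ∩ ({q1, q1'} : Multiset Q)) = 2 := by omega
    have heq : C ∩ ({q1, q1'} : Multiset Q) = {q1, q1'} :=
      Multiset.eq_of_le_of_card_le Multiset.inter_le_right (by rw [hcc2]; simp)
    exact ⟨a, q1, q2, q1', q2', he1, he2, heq ▸ hle, hC'⟩

lemma interp_step (hsym : P.IsSymmetric) {C C' : Multiset Q} {c : P.AbsConf}
    (hc : P.Interp c C) (hs : P.Step C C')
    (hcard : Multiset.card C' = Multiset.card C) :
    ∃ c', P.EOStep c c' ∧ P.Interp c' C' := by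
  obtain ⟨hcfg, hlead, hpar⟩ := hc
  obtain ⟨a, q1, q2, q1', q2', he1, he2, hM, hC'⟩ := (P.step_card_facts hs).2 hcard
  have hl12 : P.isLeader q1 = P.isLeader q2 := P.hE _ he1
  have hl12' : P.isLeader q1' = P.isLeader q2' := P.hE _ he2
  -- exact count bookkeeping
  have hcnt : ∀ q : Q, Multiset.count q C' + Multiset.count q ({q1, q1'} : Multiset Q)
      = Multiset.count q C + Multiset.count q ({q2, q2'} : Multiset Q) := by
    intro q
    have hq := Multiset.count_le_of_le q hM
    rw [hC']
    simp only [Multiset.count_add, Multiset.count_sub]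
    omega
  -- the new configuration is a configuration
  have hcfg' : P.IsConfig C' := by
    have hfle := Multiset.filter_le_filter (fun q => P.isLeader q = true) hM
    have e1 : Multiset.card (Multiset.filter (fun q => P.isLeader q = true)
        ({q1, q1'} : Multiset Q))
        = (if P.isLeader q1 = true then 1 else 0) + (if P.isLeader q1' = true then 1 else 0) := by
      rw [show ({q1, q1'} : Multiset Q) = q1 ::ₘ {q1'} from rfl]
      by_cases hb1 : P.isLeader q1 = true <;> by_cases hb2 : P.isLeader q1' = true <;>
        simp [Multiset.filter_cons, Multiset.filter_singleton, hb1, hb2]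
    have e2 : Multiset.card (Multiset.filter (fun q => P.isLeader q = true)
        ({q2, q2'} : Multiset Q))
        = (if P.isLeader q1 = true then 1 else 0) + (if P.isLeader q1' = true then 1 else 0) := by
      rw [show ({q2, q2'} : Multiset Q) = q2 ::ₘ {q2'} from rfl, hl12, hl12']
      by_cases hb1 : P.isLeader q2 = true <;> by_cases hb2 : P.isLeader q2' = true <;>
        simp [Multiset.filter_cons, Multiset.filter_singleton, hb1, hb2]
    have e3 := Multiset.card_le_card hfle
    unfold IsConfig at hcfg ⊢
    rw [hC', Multiset.filter_add, Multiset.card_add, Multiset.filter_sub,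
        Multiset.card_sub hfle, e2]
    rw [e1, hcfg] at e3
    rw [hcfg]
    omega
  obtain ⟨x, hxl, hx⟩ := P.leader_char hcfg
  have hc1x : (c.1 : Q) = x := by
    have h2 := hx (c.1 : Q) c.1.2
    rw [hlead] at h2
    by_cases hxx : (c.1 : Q) = x
    · exact hxx
    · simp [hxx] at h2
  by_cases hL1 : P.isLeader q1 = true <;> by_cases hL1' : P.isLeader q1' = true
  · -- both leaders: impossible
    exfalso
    have hpos : ∀ y : Q, (y = q1 ∨ y = q1') → 0 < Multiset.count y C := by
      intro y hy
      have h0 := Multiset.count_le_of_le y hM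
      rw [count_pair] at h0
      have h5 : (1:ℕ) ≤ (if y = q1 then 1 else 0) + (if y = q1' then 1 else 0) := by
        rcases hy with h | h <;> simp [h]
      omega
    have e1 := hx q1 hL1
    have e2 := hx q1' hL1'
    have hq1x : q1 = x := by
      by_contra hne; rw [if_neg hne] at e1
      have := hpos q1 (Or.inl rfl); omega
    have hq1'x : q1' = x := by
      by_contra hne; rw [if_neg hne] at e2
      have := hpos q1' (Or.inr rfl); omega
    have h4 := Multiset.count_le_of_le q1 hM
    rw [count_pair, hx q1 hL1, if_pos hq1x] at h4
    have h5 : q1 = q1' := hq1x.trans hq1'x.symm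
    simp [h5] at h4
  · -- q1 leader (recv side), q1' process
    have hL1'f : P.isLeader q1' = false := by simpa using hL1'
    have hl2 : P.isLeader q2 = true := hl12 ▸ hL1
    have hl2' : P.isLeader q2' = false := hl12' ▸ hL1'f
    have hq1x : q1 = x := by
      have e1 := hx q1 hL1
      by_contra hne; rw [if_neg hne] at e1
      have h0 := Multiset.count_le_of_le q1 hM
      rw [count_pair] at h0
      simp at h0
      omega
    have hc1q1 : (c.1 : Q) = q1 := hc1x.trans hq1x.symm
    refine ⟨(⟨q2, hl2⟩, flipTwo c.2 ⟨q1', hL1'f⟩ ⟨q2', hl2'⟩), ?_, ?_, ?_, ?_⟩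
    · exact Or.inl ⟨a, ⟨q1', hL1'f⟩, ⟨q2', hl2'⟩,
        by rw [hc1q1]; exact (hsym q1 a q2).mpr he1, he2, rfl⟩
    · exact hcfg'
    · -- count of new leader state
      show Multiset.count q2 C' = 1
      have h0 := hcnt q2
      rw [count_pair, count_pair, hx q2 hl2] at h0
      have hne1 : q2 ≠ q1' := by
        intro h; rw [h, hL1'f] at hl2; cases hl2
      have hne2 : q2 ≠ q2' := by
        intro h; rw [h, hl2'] at hl2; cases hl2
      rw [← hq1x] at h0
      simp only [if_neg hne1, if_neg hne2, if_pos rfl] at h0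
      by_cases hq : q2 = q1
      · subst hq; simp at h0; omega
      · simp [hq] at h0; omega
    · intro q
      have hq1 : (q : Q) ≠ q1 := by
        intro h; have h2 := q.2; rw [h, hL1] at h2; cases h2
      have hq2 : (q : Q) ≠ q2 := by
        intro h; have h2 := q.2; rw [h, hl2] at h2; cases h2
      have h0 := hcnt (q : Q)
      rw [count_pair, count_pair, if_neg hq1, if_neg hq2] at h0
      simp only [zero_add] at h0
      have hres := even_flip1 (Multiset.count (q : Q) C) (Multiset.count (q : Q) C')
        ((q : Q) = q1') ((q : Q) = q2') (c.2 q) h0 (hpar q)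
      simpa [flipTwo_spec, Subtype.ext_iff] using hres
  · -- q1 process, q1' leader (send side)
    have hL1f : P.isLeader q1 = false := by simpa using hL1
    have hl2 : P.isLeader q2 = false := hl12 ▸ hL1f
    have hl2' : P.isLeader q2' = true := hl12' ▸ hL1'
    have hq1'x : q1' = x := by
      have e1 := hx q1' hL1'
      by_contra hne; rw [if_neg hne] at e1
      have h0 := Multiset.count_le_of_le q1' hM
      rw [count_pair] at h0
      simp at h0
      omega
    have hc1q1' : (c.1 : Q) = q1' := hc1x.trans hq1'x.symm
    refine ⟨(⟨q2', hl2'⟩, flipTwo c.2 ⟨q1, hL1f⟩ ⟨q2, hl2⟩), ?_, ?_, ?_, ?_⟩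
    · exact Or.inl ⟨a, ⟨q1, hL1f⟩, ⟨q2, hl2⟩,
        by rw [hc1q1']; exact he2, (hsym q1 a q2).mpr he1, rfl⟩
    · exact hcfg'
    · show Multiset.count q2' C' = 1
      have h0 := hcnt q2'
      rw [count_pair, count_pair, hx q2' hl2'] at h0
      have hne1 : q2' ≠ q1 := by
        intro h; rw [h, hL1f] at hl2'; cases hl2'
      have hne2 : q2' ≠ q2 := by
        intro h; rw [h, hl2] at hl2'; cases hl2'
      rw [← hq1'x] at h0
      simp only [if_neg hne1, if_neg hne2, if_pos rfl] at h0
      by_cases hq : q2' = q1'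
      · subst hq; simp at h0; omega
      · simp [hq] at h0; omega
    · intro q
      have hq1 : (q : Q) ≠ q1' := by
        intro h; have h2 := q.2; rw [h, hL1'] at h2; cases h2
      have hq2 : (q : Q) ≠ q2' := by
        intro h; have h2 := q.2; rw [h, hl2'] at h2; cases h2
      have h0 := hcnt (q : Q)
      rw [count_pair, count_pair, if_neg hq1, if_neg hq2] at h0
      simp only [add_zero] at h0
      have hres := even_flip1 (Multiset.count (q : Q) C) (Multiset.count (q : Q) C')
        ((q : Q) = q1) ((q : Q) = q2) (c.2 q) h0 (hpar q)
      simpa [flipTwo_spec, Subtype.ext_iff] using hres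
  · -- both process states
    have hL1f : P.isLeader q1 = false := by simpa using hL1
    have hL1'f : P.isLeader q1' = false := by simpa using hL1'
    have hl2 : P.isLeader q2 = false := hl12 ▸ hL1f
    have hl2' : P.isLeader q2' = false := hl12' ▸ hL1'f
    refine ⟨(c.1, flipTwo (flipTwo c.2 ⟨q1', hL1'f⟩ ⟨q2', hl2'⟩) ⟨q1, hL1f⟩ ⟨q2, hl2⟩),
      ?_, ?_, ?_, ?_⟩
    · exact Or.inr ⟨rfl, a, ⟨q1', hL1'f⟩, ⟨q2', hl2'⟩, ⟨q1, hL1f⟩, ⟨q2, hl2⟩,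
        he2, (hsym q1 a q2).mpr he1, rfl⟩
    · exact hcfg'
    · show Multiset.count (c.1 : Q) C' = 1
      have h0 := hcnt (c.1 : Q)
      have hne : ∀ y : Q, P.isLeader y = false → (c.1 : Q) ≠ y := by
        intro y hy h; have h2 := c.1.2; rw [h, hy] at h2; cases h2
      rw [count_pair, count_pair, if_neg (hne _ hL1f), if_neg (hne _ hL1'f),
          if_neg (hne _ hl2), if_neg (hne _ hl2')] at h0
      simpa [hlead] using h0
    · intro q
      have h0 := hcnt (q : Q)
      rw [count_pair, count_pair] at h0
      have hres := even_flip2 (Multiset.count (q : Q) C) (Multiset.count (q : Q) C')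
        ((q : Q) = q1) ((q : Q) = q1') ((q : Q) = q2) ((q : Q) = q2') (c.2 q) h0 (hpar q)
      simpa [flipTwo_spec, Subtype.ext_iff] using hres

lemma count_Ci (n : ℕ) (q : Q) :
    Multiset.count q (P.Ci n) = (if q = P.qi then n else 0) + (if q = P.qiL then 1 else 0) := by
  simp only [Ci, Multiset.count_add, Multiset.count_replicate, Multiset.count_singleton]
  congr 1
  by_cases h : q = P.qi <;> simp [h, eq_comm]

lemma count_Cf (n : ℕ) (q : Q) :
    Multiset.count q (P.Cf n) = (if q = P.qf then n else 0) + (if q = P.qfL then 1 else 0) := by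
  simp only [Cf, Multiset.count_add, Multiset.count_replicate, Multiset.count_singleton]
  congr 1
  by_cases h : q = P.qf <;> simp [h, eq_comm]

lemma isConfig_Ci (n : ℕ) : P.IsConfig (P.Ci n) := by
  unfold IsConfig Ci
  rw [Multiset.filter_add, Multiset.filter_eq_nil.mpr (by
    intro a ha
    rw [Multiset.eq_of_mem_replicate ha]
    simp [P.hqi]), Multiset.filter_singleton, if_pos P.hqiL]
  simp

lemma interp_absIE (n : ℕ) (hn : Even n) : P.Interp P.absIE (P.Ci n) := by
  have hne : P.qiL ≠ P.qi := by
    intro h; have := P.hqiL; rw [h, P.hqi] at this; cases this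
  refine ⟨P.isConfig_Ci n, ?_, ?_⟩
  · rw [absIE]
    rw [P.count_Ci]
    simp [hne]
  · intro q
    have hq : (q : Q) ≠ P.qiL := by
      intro h; have h2 := q.2; rw [h, P.hqiL] at h2; cases h2
    rw [P.count_Ci, if_neg hq]
    simp only [absIE, add_zero]
    by_cases h : (q : Q) = P.qi <;> simp [h, hn]

lemma interp_absIO (n : ℕ) (hn : Odd n) : P.Interp P.absIO (P.Ci n) := by
  have hne : P.qiL ≠ P.qi := by
    intro h; have := P.hqiL; rw [h, P.hqi] at this; cases this
  refine ⟨P.isConfig_Ci n, ?_, ?_⟩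
  · rw [absIO]
    rw [P.count_Ci]
    simp [hne]
  · intro q
    have hq : (q : Q) ≠ P.qiL := by
      intro h; have h2 := q.2; rw [h, P.hqiL] at h2; cases h2
    rw [P.count_Ci, if_neg hq]
    simp only [absIO, add_zero]
    by_cases h : (q : Q) = P.qi
    · rw [if_pos h]; simp [h, Nat.even_iff, Nat.odd_iff.mp hn]
    · rw [if_neg h]; simp [h]

lemma interp_Cf_unique (n : ℕ) (c : P.AbsConf) (h : P.Interp c (P.Cf n)) :
    (Even n → c = P.absFE) ∧ (Odd n → c = P.absFO) := by
  obtain ⟨hcfg, hlead, hpar⟩ := h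
  have hne : P.qfL ≠ P.qf := by
    intro h; have := P.hqfL; rw [h, P.hqf] at this; cases this
  have hc1 : (c.1 : Q) = P.qfL := by
    have h2 := P.count_Cf n (c.1 : Q)
    rw [hlead] at h2
    have hq : (c.1 : Q) ≠ P.qf := by
      intro h; have h3 := c.1.2; rw [h, P.hqf] at h3; cases h3
    rw [if_neg hq] at h2
    by_cases h : (c.1 : Q) = P.qfL
    · exact h
    · rw [if_neg h] at h2; simp at h2
  have hcnt : ∀ q : P.ProcState, Multiset.count (q : Q) (P.Cf n)
      = if (q : Q) = P.qf then n else 0 := by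
    intro q
    have hq : (q : Q) ≠ P.qfL := by
      intro h; have h2 := q.2; rw [h, P.hqfL] at h2; cases h2
    rw [P.count_Cf, if_neg hq, add_zero]
  constructor
  · intro hn
    refine Prod.ext (Subtype.ext (by rw [hc1]; rfl)) (funext fun q => ?_)
    have h2 := hpar q
    rw [hcnt] at h2
    simp only [absFE]
    by_cases h : (q : Q) = P.qf
    · rw [if_pos h] at h2; exact h2.mp hn
    · rw [if_neg h] at h2; exact h2.mp (by simp)
  · intro hn
    refine Prod.ext (Subtype.ext (by rw [hc1]; rfl)) (funext fun q => ?_)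
    have h2 := hpar q
    rw [hcnt] at h2
    simp only [absFO]
    by_cases h : (q : Q) = P.qf
    · rw [if_pos h] at h2
      simp only [h, decide_true]
      by_cases hb : c.2 q = false
      · exact absurd (h2.mpr hb) ((Nat.not_even_iff_odd.mpr hn))
      · simpa using hb
    · rw [if_neg h] at h2
      simp only [h, decide_false]
      exact h2.mp (by simp)

lemma reach_card_mono {C C' : Multiset Q} (h : P.Reach C C') :
    Multiset.card C ≤ Multiset.card C' := by
  induction h with
  | refl => exact le_refl _
  | tail _ hbd ih => exact ih.trans (P.step_card_facts hbd).1

end RVProtocol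

end EOAux

/-- **Completeness of the even-odd abstraction.** If `C_i^{(n)} →* C_f^{(n)}`
in a symmetric rendez-vous protocol, then `(q_i^L,γ_i^E) ⇝* (q_f^L,γ_f^E)` when `n` is even
and `(q_i^L,γ_i^O) ⇝* (q_f^L,γ_f^O)` when `n` is odd. -/
theorem eo_abstraction_complete {Q A : Type} [Fintype Q] [Fintype A] [DecidableEq Q]
    (P : RVProtocol Q A) (hsym : P.IsSymmetric) (n : ℕ)
    (h : P.Reach (P.Ci n) (P.Cf n)) :
    (Even n → P.EOReach P.absIE P.absFE) ∧ (Odd n → P.EOReach P.absIO P.absFO) := by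
  have key : ∀ C C' : Multiset Q, P.Reach C C' →
      Multiset.card C' = Multiset.card C →
      ∀ c, P.Interp c C → ∃ c', P.EOReach c c' ∧ P.Interp c' C' := by
    intro C C' h
    induction h with
    | refl => exact fun _ c hc => ⟨c, Relation.ReflTransGen.refl, hc⟩
    | @tail b d hab hbd ih =>
      intro hcard c hc
      have h1 : Multiset.card b ≤ Multiset.card d := (P.step_card_facts hbd).1
      have h2 : Multiset.card C ≤ Multiset.card b := P.reach_card_mono hab
      obtain ⟨c1, hr1, hi1⟩ := ih (by omega) c hc
      obtain ⟨c2, hs2, hi2⟩ := P.interp_step hsym hi1 hbd (by omega)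
      exact ⟨c2, hr1.tail hs2, hi2⟩
  have hcards : Multiset.card (P.Cf n) = Multiset.card (P.Ci n) := by
    simp [RVProtocol.Ci, RVProtocol.Cf]
  constructor
  · intro hn
    obtain ⟨c', hreach, hint⟩ := key _ _ h hcards P.absIE (P.interp_absIE n hn)
    rwa [(P.interp_Cf_unique n c' hint).1 hn] at hreach
  · intro hn
    obtain ⟨c', hreach, hint⟩ := key _ _ h hcards P.absIO (P.interp_absIO n hn)
    rwa [(P.interp_Cf_unique n c' hint).2 hn] at hreach
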